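/- Under the conformal-block-expansion setup below, assume in addition that there is τ_gap > 0 with τ_i ≥ τ_gap for every i ∈ I. Then τ_gap ≤ 2Δφ. -/

import Mathlib

open Set

/-- A single conformal block contribution:
`g_i(z, z̄) = (z z̄)^(τᵢ/2) ∑_{n,m} a^{(i)}_{n,m} z^n z̄^m`. -/
noncomputable def blockFun (τi : ℝ) (coef : ℕ × ℕ → ℝ) (z zb : ℝ) : ℝ :=
  (z * zb) ^ (τi / 2) * ∑' nm : ℕ × ℕ, coef nm * z ^ nm.1 * zb ^ nm.2

lemma blockFun_nonneg (τi : ℝ) (coef : ℕ × ℕ → ℝ) (hc : ∀ nm, 0 ≤ coef nm)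
    {z w : ℝ} (hz : 0 ≤ z) (hw : 0 ≤ w) : 0 ≤ blockFun τi coef z w := by
  unfold blockFun
  have h : 0 ≤ ∑' nm : ℕ × ℕ, coef nm * z ^ nm.1 * w ^ nm.2 :=
    tsum_nonneg fun nm => mul_nonneg (mul_nonneg (hc nm) (pow_nonneg hz _)) (pow_nonneg hw _)
  exact mul_nonneg (Real.rpow_nonneg (mul_nonneg hz hw) _) h

lemma blockFun_compare (τi t : ℝ) (coef : ℕ × ℕ → ℝ) (hc : ∀ nm, 0 ≤ coef nm)
    {z w c cw : ℝ} (hz : 0 < z) (hzc : z ≤ c) (hw : 0 < w) (hwcw : w ≤ cw)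
    (ht : 0 ≤ t) (hti : t ≤ τi)
    (hS1 : Summable (fun nm : ℕ × ℕ => coef nm * z ^ nm.1 * w ^ nm.2))
    (hS2 : Summable (fun nm : ℕ × ℕ => coef nm * c ^ nm.1 * cw ^ nm.2)) :
    blockFun τi coef z w ≤ (z / c * (w / cw)) ^ (t / 2) * blockFun τi coef c cw := by
  have hcpos : 0 < c := lt_of_lt_of_le hz hzc
  have hcwpos : 0 < cw := lt_of_lt_of_le hw hwcw
  have hq : 0 < z / c * (w / cw) := by positivity
  have hq1 : z / c * (w / cw) ≤ 1 :=
    mul_le_one₀ ((div_le_one hcpos).mpr hzc) (by positivity) ((div_le_one hcwpos).mpr hwcw)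
  have hS : 0 ≤ ∑' nm : ℕ × ℕ, coef nm * c ^ nm.1 * cw ^ nm.2 :=
    tsum_nonneg fun nm => mul_nonneg (mul_nonneg (hc nm) (pow_nonneg hcpos.le _)) (pow_nonneg hcwpos.le _)
  have hSle : (∑' nm : ℕ × ℕ, coef nm * z ^ nm.1 * w ^ nm.2)
      ≤ ∑' nm : ℕ × ℕ, coef nm * c ^ nm.1 * cw ^ nm.2 := by
    refine Summable.tsum_le_tsum (fun nm => ?_) hS1 hS2
    have h1 : z ^ nm.1 ≤ c ^ nm.1 := pow_le_pow_left₀ hz.le hzc _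
    have h2 : w ^ nm.2 ≤ cw ^ nm.2 := pow_le_pow_left₀ hw.le hwcw _
    calc coef nm * z ^ nm.1 * w ^ nm.2
        ≤ coef nm * c ^ nm.1 * w ^ nm.2 :=
          mul_le_mul_of_nonneg_right (mul_le_mul_of_nonneg_left h1 (hc nm))
            (pow_nonneg hw.le _)
      _ ≤ coef nm * c ^ nm.1 * cw ^ nm.2 :=
          mul_le_mul_of_nonneg_left h2 (mul_nonneg (hc nm) (pow_nonneg hcpos.le _))
  have key : (z * w) ^ (τi / 2) ≤ (z / c * (w / cw)) ^ (t / 2) * (c * cw) ^ (τi / 2) := by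
    have hzw : z * w = (z / c * (w / cw)) * (c * cw) := by field_simp
    rw [hzw, Real.mul_rpow hq.le (by positivity)]
    exact mul_le_mul_of_nonneg_right
      (Real.rpow_le_rpow_of_exponent_ge hq hq1 (by linarith))
      (Real.rpow_nonneg (by positivity) _)
  unfold blockFun
  calc (z * w) ^ (τi / 2) * ∑' nm : ℕ × ℕ, coef nm * z ^ nm.1 * w ^ nm.2
      ≤ (z * w) ^ (τi / 2) * ∑' nm : ℕ × ℕ, coef nm * c ^ nm.1 * cw ^ nm.2 :=
        mul_le_mul_of_nonneg_left hSle (Real.rpow_nonneg (by positivity) _)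
    _ ≤ ((z / c * (w / cw)) ^ (t / 2) * (c * cw) ^ (τi / 2)) *
          ∑' nm : ℕ × ℕ, coef nm * c ^ nm.1 * cw ^ nm.2 :=
        mul_le_mul_of_nonneg_right key hS
    _ = (z / c * (w / cw)) ^ (t / 2) *
          ((c * cw) ^ (τi / 2) * ∑' nm : ℕ × ℕ, coef nm * c ^ nm.1 * cw ^ nm.2) := by ring

set_option maxHeartbeats 1000000 in
/-- Theorem 2.1(a): in the conformal-block-expansion setup, a twist gap
`τᵢ ≥ τ_gap > 0` forces `τ_gap ≤ 2Δφ`. -/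
theorem stmt3 {I : Type*} [Countable I] (Δφ : ℝ) (hΔ : 0 < Δφ)
    (p τ : I → ℝ) (coef : I → ℕ × ℕ → ℝ)
    (hp : ∀ i, 0 ≤ p i) (hτ : ∀ i, 0 ≤ τ i) (hcoef : ∀ i nm, 0 ≤ coef i nm)
    (hinner : ∀ i, ∀ z zb : ℝ, 0 ≤ z → z < 1 → 0 ≤ zb → zb < 1 →
      Summable (fun nm : ℕ × ℕ => coef i nm * z ^ nm.1 * zb ^ nm.2))
    (hsum : ∀ z zb : ℝ, z ∈ Ioo (0:ℝ) 1 → zb ∈ Ioo (0:ℝ) 1 →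
      Summable (fun i => p i * blockFun (τ i) (coef i) z zb))
    (hcross : ∀ z zb : ℝ, z ∈ Ioo (0:ℝ) 1 → zb ∈ Ioo (0:ℝ) 1 →
      1 + ∑' i, p i * blockFun (τ i) (coef i) z zb =
        (z * zb / ((1 - z) * (1 - zb))) ^ Δφ *
          (1 + ∑' i, p i * blockFun (τ i) (coef i) (1 - z) (1 - zb)))
    (τgap : ℝ) (hgap : 0 < τgap) (hτgap : ∀ i, τgap ≤ τ i) :
    τgap ≤ 2 * Δφ := by
  by_contra hlt
  push_neg at hlt
  obtain ⟨G, hGapp⟩ : ∃ G : ℝ → ℝ → ℝ, ∀ z w : ℝ,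
      G z w = ∑' i, p i * blockFun (τ i) (coef i) z w :=
    ⟨fun z w => ∑' i, p i * blockFun (τ i) (coef i) z w, fun _ _ => rfl⟩
  -- nonnegativity of G
  have hGnn : ∀ z w : ℝ, 0 ≤ z → 0 ≤ w → 0 ≤ G z w := fun z w hz hw => by
    rw [hGapp]
    exact tsum_nonneg fun i => mul_nonneg (hp i) (blockFun_nonneg _ _ (hcoef i) hz hw)
  -- comparison for G
  have hGcomp : ∀ z w c cw : ℝ, 0 < z → z ≤ c → c < 1 → 0 < w → w ≤ cw → cw < 1 →
      G z w ≤ (z / c * (w / cw)) ^ (τgap / 2) * G c cw := by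
    intro z w c cw hz hzc hc1 hw hwcw hcw1
    have hcpos : 0 < c := lt_of_lt_of_le hz hzc
    have hcwpos : 0 < cw := lt_of_lt_of_le hw hwcw
    have hz1 : z < 1 := lt_of_le_of_lt hzc hc1
    have hw1 : w < 1 := lt_of_le_of_lt hwcw hcw1
    have hterm : ∀ i, p i * blockFun (τ i) (coef i) z w ≤
        (z / c * (w / cw)) ^ (τgap / 2) * (p i * blockFun (τ i) (coef i) c cw) := by
      intro i
      have hb := blockFun_compare (τ i) τgap (coef i) (hcoef i) hz hzc hw hwcw hgap.le
        (hτgap i) (hinner i z w hz.le hz1 hw.le hw1) (hinner i c cw hcpos.le hc1 hcwpos.le hcw1)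
      calc p i * blockFun (τ i) (coef i) z w
          ≤ p i * ((z / c * (w / cw)) ^ (τgap / 2) * blockFun (τ i) (coef i) c cw) :=
            mul_le_mul_of_nonneg_left hb (hp i)
        _ = (z / c * (w / cw)) ^ (τgap / 2) * (p i * blockFun (τ i) (coef i) c cw) := by ring
    have hs1 : Summable (fun i => p i * blockFun (τ i) (coef i) z w) :=
      hsum z w ⟨hz, hz1⟩ ⟨hw, hw1⟩
    have hs2 : Summable (fun i => (z / c * (w / cw)) ^ (τgap / 2) *
        (p i * blockFun (τ i) (coef i) c cw)) :=
      (hsum c cw ⟨hcpos, hc1⟩ ⟨hcwpos, hcw1⟩).mul_left _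
    rw [hGapp z w, hGapp c cw]
    calc (∑' i, p i * blockFun (τ i) (coef i) z w)
        ≤ ∑' i, (z / c * (w / cw)) ^ (τgap / 2) *
          (p i * blockFun (τ i) (coef i) c cw) := Summable.tsum_le_tsum hterm hs1 hs2
      _ = (z / c * (w / cw)) ^ (τgap / 2) *
          ∑' i, p i * blockFun (τ i) (coef i) c cw := tsum_mul_left
  -- parameters
  obtain ⟨δ, hδdef⟩ : ∃ x : ℝ, x = (τgap / 2 - Δφ) / 2 := ⟨_, rfl⟩
  have hδ : 0 < δ := by rw [hδdef]; linarith
  obtain ⟨u, hudef⟩ : ∃ x : ℝ, x = Δφ + δ := ⟨_, rfl⟩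
  obtain ⟨K, hKdef⟩ : ∃ x : ℝ, x = G (1/2) (1/2) := ⟨_, rfl⟩
  have hK : 0 ≤ K := by rw [hKdef]; exact hGnn _ _ (by norm_num) (by norm_num)
  obtain ⟨C, hCdef⟩ : ∃ x : ℝ, x = 2 ^ (τgap / 2) * (1 + K) := ⟨_, rfl⟩
  have hC : 0 < C := by rw [hCdef]; exact mul_pos (Real.rpow_pos_of_pos two_pos _) (by linarith)
  obtain ⟨y, hydef⟩ : ∃ x : ℝ, x = (2 + C) ^ (-(1/δ)) := ⟨_, rfl⟩
  have hy : 0 < y := by rw [hydef]; exact Real.rpow_pos_of_pos (by linarith) _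
  have hyδ : y ^ δ = (2 + C)⁻¹ := by
    rw [hydef, ← Real.rpow_mul (by linarith : (0:ℝ) ≤ 2 + C),
      show (-(1/δ)) * δ = -1 by field_simp, Real.rpow_neg_one]
  obtain ⟨a, hadef⟩ : ∃ x : ℝ, x = min (1/2) y := ⟨_, rfl⟩
  have ha : 0 < a := by rw [hadef]; exact lt_min (by norm_num) hy
  have ha2 : a ≤ 1/2 := by rw [hadef]; exact min_le_left _ _
  have hay : a ≤ y := by rw [hadef]; exact min_le_right _ _
  have ha1 : a < 1 := lt_of_le_of_lt ha2 (by norm_num)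
  have h1apos : 0 < 1 - a := by linarith
  have haδ : a ^ δ ≤ (2 + C)⁻¹ := hyδ ▸ Real.rpow_le_rpow ha.le hay hδ.le
  have haδpos : 0 < a ^ δ := Real.rpow_pos_of_pos ha _
  have hupos : 0 < u := by rw [hudef]; linarith
  obtain ⟨v, hvdef⟩ : ∃ x : ℝ, x = u / Δφ := ⟨_, rfl⟩
  have hv : 0 < v := by rw [hvdef]; exact div_pos hupos hΔ
  obtain ⟨q, hqdef⟩ : ∃ x : ℝ, x = a ^ v := ⟨_, rfl⟩
  have hq : 0 < q := by rw [hqdef]; exact Real.rpow_pos_of_pos ha _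
  have hq1 : q ≤ 1 := by rw [hqdef]; exact Real.rpow_le_one ha.le ha1.le hv.le
  have h1q : (0:ℝ) < 1 + q := by linarith
  obtain ⟨b, hbdef⟩ : ∃ x : ℝ, x = q / (1 + q) := ⟨_, rfl⟩
  have hb : 0 < b := by rw [hbdef]; exact div_pos hq h1q
  have hb2 : b ≤ 1/2 := by
    rw [hbdef, div_le_div_iff₀ h1q (by norm_num)]; linarith
  have h1b : 1 - b = 1 / (1 + q) := by
    rw [hbdef]; field_simp; ring
  have h1bpos : 0 < 1 - b := by rw [h1b]; positivity
  have hABval : (1 - b) / b = q⁻¹ := by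
    rw [h1b, hbdef]; field_simp
  obtain ⟨A, hAdef⟩ : ∃ x : ℝ, x = ((1 - b) / b) ^ Δφ := ⟨_, rfl⟩
  have hApos : 0 < A := by rw [hAdef]; exact Real.rpow_pos_of_pos (div_pos h1bpos hb) _
  have hAa : A = a ^ (-u) := by
    rw [hAdef, hABval, hqdef, ← Real.rpow_neg ha.le, ← Real.rpow_mul ha.le]
    congr 1
    rw [hvdef]
    field_simp
  -- crossing at (a, 1-b)
  have hcr1 : 1 + G a (1-b) =
      (a * (1-b) / ((1-a) * b)) ^ Δφ * (1 + G (1-a) b) := by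
    have h := hcross a (1-b) ⟨ha, ha1⟩ ⟨h1bpos, by linarith⟩
    rw [show (1:ℝ) - (1 - b) = b by ring, ← hGapp a (1-b), ← hGapp (1-a) b] at h
    exact h
  have hPsplit : (a * (1 - b) / ((1 - a) * b)) ^ Δφ = (a / (1 - a)) ^ Δφ * A := by
    rw [hAdef, ← Real.mul_rpow (div_pos ha h1apos).le (div_pos h1bpos hb).le,
      div_mul_div_comm]
  -- crossing at (1/2, 1-b)
  have hcr2 : 1 + G (1/2) (1-b) = A * (1 + G (1/2) b) := by
    have h := hcross (1/2) (1-b) ⟨by norm_num, by norm_num⟩ ⟨h1bpos, by linarith⟩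
    rw [show (1:ℝ) - (1 - b) = b by ring, show (1:ℝ) - 1/2 = 1/2 by norm_num,
      show (1:ℝ)/2 * (1 - b) / (1/2 * b) = (1 - b) / b by
        rw [mul_div_mul_left _ _ (by norm_num : (1:ℝ)/2 ≠ 0)],
      ← hAdef, ← hGapp (1/2) (1-b), ← hGapp (1/2) b] at h
    exact h
  -- step 1: lower bound on prefactor
  have hadiv : a ≤ a / (1 - a) := by
    rw [le_div_iff₀ h1apos]
    have := mul_nonneg ha.le ha.le
    nlinarith [this]
  have step1 : a ^ Δφ * A ≤ (a / (1 - a)) ^ Δφ * A :=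
    mul_le_mul_of_nonneg_right (Real.rpow_le_rpow ha.le hadiv hΔ.le) hApos.le
  -- step 2: prefactor ≤ LHS of crossing
  have step2 : (a / (1 - a)) ^ Δφ * A ≤ 1 + G a (1-b) := by
    rw [hcr1, hPsplit]
    have hGnb : 0 ≤ G (1-a) b := hGnn _ _ (by linarith) hb.le
    have hPnn : 0 ≤ (a / (1 - a)) ^ Δφ * A :=
      mul_nonneg (Real.rpow_nonneg (div_pos ha h1apos).le _) hApos.le
    exact le_mul_of_one_le_right hPnn (by linarith)
  -- step 3: comparison in first variable
  have step3 : G a (1-b) ≤ (2*a) ^ (τgap/2) * G (1/2) (1-b) := by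
    have h3 := hGcomp a (1-b) (1/2) (1-b) ha ha2 (by norm_num) h1bpos le_rfl (by linarith)
    rw [show a / (1/2) * ((1-b)/(1-b)) = 2*a by rw [div_self h1bpos.ne']; ring] at h3
    exact h3
  -- step 4: comparison in second variable at 1/2
  have step4 : G (1/2) b ≤ K := by
    have h4 := hGcomp (1/2) b (1/2) (1/2) (by norm_num) le_rfl (by norm_num) hb hb2 (by norm_num)
    rw [show (1:ℝ)/2 / (1/2) * (b / (1/2)) = 2*b by ring, ← hKdef] at h4
    have hfle : (2*b) ^ (τgap/2) ≤ 1 :=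
      Real.rpow_le_one (by linarith) (by linarith) (by linarith)
    have := mul_le_mul_of_nonneg_right hfle hK
    rw [one_mul] at this
    calc G (1/2) b ≤ (2*b) ^ (τgap/2) * K := h4
      _ ≤ K := this
  -- step 5
  have step5 : G (1/2) (1-b) ≤ A * (1 + K) := by
    have h5 : A * (1 + G (1/2) b) ≤ A * (1 + K) :=
      mul_le_mul_of_nonneg_left (by linarith) hApos.le
    linarith [hcr2 ▸ h5]
  -- assemble
  have hpw : (0:ℝ) ≤ (2*a) ^ (τgap/2) := Real.rpow_nonneg (by linarith) _
  have main : a ^ Δφ * A ≤ 1 + (2*a) ^ (τgap/2) * (A * (1 + K)) := by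
    have h6 : (2*a) ^ (τgap/2) * G (1/2) (1-b) ≤ (2*a) ^ (τgap/2) * (A * (1 + K)) :=
      mul_le_mul_of_nonneg_left step5 hpw
    have hGanb : G a (1-b) ≤ (2*a) ^ (τgap/2) * (A * (1 + K)) := le_trans step3 h6
    linarith [le_trans step1 step2]
  have hL : a ^ Δφ * A = a ^ (-δ) := by
    rw [hAa, ← Real.rpow_add ha]
    congr 1
    rw [hudef]; ring
  have hR : (2*a) ^ (τgap/2) * (A * (1 + K)) = C * a ^ δ := by
    rw [Real.mul_rpow (by norm_num : (0:ℝ) ≤ 2) ha.le, hAa]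
    calc (2:ℝ) ^ (τgap/2) * a ^ (τgap/2) * (a ^ (-u) * (1 + K))
        = (2 ^ (τgap/2) * (1 + K)) * (a ^ (τgap/2) * a ^ (-u)) := by ring
      _ = C * a ^ δ := by
          rw [← Real.rpow_add ha, ← hCdef]
          congr 1
          rw [hudef, hδdef]; ring
  rw [hL, hR, Real.rpow_neg ha.le] at main
  -- main : (a^δ)⁻¹ ≤ 1 + C * a^δ
  have h1 : a ^ δ * (2 + C) ≤ 1 := by
    have h := mul_le_mul_of_nonneg_left haδ (by linarith : (0:ℝ) ≤ 2 + C)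
    rw [mul_inv_cancel₀ (by linarith : (2:ℝ) + C ≠ 0)] at h
    linarith
  have h2 : 1 ≤ a ^ δ + C * (a ^ δ)^2 := by
    have h := mul_le_mul_of_nonneg_left main haδpos.le
    rw [mul_inv_cancel₀ haδpos.ne'] at h
    linarith [show a ^ δ * (1 + C * a ^ δ) = a ^ δ + C * (a ^ δ)^2 from by ring, h]
  have e1 := mul_le_mul_of_nonneg_left h1 haδpos.le
  -- e1 : a^δ * (a^δ * (2 + C)) ≤ a^δ * 1
  have e1' : 2 * (a ^ δ)^2 + C * (a ^ δ)^2 ≤ a ^ δ := by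
    have : a ^ δ * (a ^ δ * (2 + C)) = 2 * (a ^ δ)^2 + C * (a ^ δ)^2 := by ring
    linarith [this ▸ e1]
  linarith [sq_nonneg (2 * (a ^ δ) - 1), e1', h2]
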